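/- For the flipped qubit depolarising channel, the coherent information evaluated at the maximally mixed input satisfies I_c(I/2, F_{|+⟩⟨+|}(N_q)) = −(1−q/4)log₂(1/2 − q/8) − (q/4)log₂(q/8) + (3q/4)log₂(q/4) + (1−3q/4)log₂(1−3q/4), and this quantity is strictly positive at q = 1/3. -/

import Mathlib

open Matrix BigOperators Kronecker

noncomputable def plusM : Matrix (Fin 2) (Fin 2) ℂ := Matrix.of fun _ _ => (1 : ℂ) / 2

noncomputable def minusM : Matrix (Fin 2) (Fin 2) ℂ :=
  Matrix.of fun i j => if i = j then (1 : ℂ) / 2 else -((1 : ℂ) / 2)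

def e00 : Matrix (Fin 2) (Fin 2) ℂ := Matrix.of fun i j => if i = 0 ∧ j = 0 then 1 else 0

def e11 : Matrix (Fin 2) (Fin 2) ℂ := Matrix.of fun i j => if i = 1 ∧ j = 1 then 1 else 0

def pX : Matrix (Fin 2) (Fin 2) ℂ := !![0, 1; 1, 0]
def pY : Matrix (Fin 2) (Fin 2) ℂ := !![0, -Complex.I; Complex.I, 0]
def pZ : Matrix (Fin 2) (Fin 2) ℂ := !![1, 0; 0, -1]

/-- Kraus operators of the qubit depolarising channel `N_q`. -/
noncomputable def depolK (q : ℝ) : Fin 4 → Matrix (Fin 2) (Fin 2) ℂ :=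
  ![((Real.sqrt (1 - 3 * q / 4) : ℝ) : ℂ) • 1,
    ((Real.sqrt (q / 4) : ℝ) : ℂ) • pX,
    ((Real.sqrt (q / 4) : ℝ) : ℂ) • pY,
    ((Real.sqrt (q / 4) : ℝ) : ℂ) • pZ]

/-- The Kraus operators of the quantum time flip: `F_i = C_i⊗|0⟩⟨0| + C_iᵀ⊗|1⟩⟨1|`. -/
noncomputable def flipK (C : Matrix (Fin 2) (Fin 2) ℂ) :
    Matrix (Fin 2 × Fin 2) (Fin 2 × Fin 2) ℂ := C ⊗ₖ e00 + Cᵀ ⊗ₖ e11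

/-- The time flip acting on one half of a two-qubit system:
`G_i = (C_i⊗I)⊗|0⟩⟨0| + (C_iᵀ⊗I)⊗|1⟩⟨1|`. -/
noncomputable def flipKext (C : Matrix (Fin 2) (Fin 2) ℂ) :
    Matrix ((Fin 2 × Fin 2) × Fin 2) ((Fin 2 × Fin 2) × Fin 2) ℂ :=
  (C ⊗ₖ (1 : Matrix (Fin 2) (Fin 2) ℂ)) ⊗ₖ e00 + (Cᵀ ⊗ₖ (1 : Matrix (Fin 2) (Fin 2) ℂ)) ⊗ₖ e11

/-- The two-qubit maximally entangled state (purification of `I/2`). -/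
noncomputable def maxEntProj2 : Matrix (Fin 2 × Fin 2) (Fin 2 × Fin 2) ℂ :=
  Matrix.of fun p q => if p.1 = p.2 ∧ q.1 = q.2 then 1 / 2 else 0

/-- The von Neumann entropy (in bits) of a matrix, via its eigenvalues. -/
noncomputable def vNent {n : Type*} [Fintype n] [DecidableEq n] (M : Matrix n n ℂ) : ℝ :=
  if h : M.IsHermitian then -∑ i, h.eigenvalues i * Real.logb 2 (h.eigenvalues i) else 0

/-- The coherent information of the flipped qubit depolarising channel at the maximally
mixed input `I/2`: `I_c = H(F(I/2)) − H((F⊗I)(Φ))`. -/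
noncomputable def IcFlipped (q : ℝ) : ℝ :=
  vNent (∑ i, flipK (depolK q i)
      * (((1 / 2 : ℂ) • (1 : Matrix (Fin 2) (Fin 2) ℂ)) ⊗ₖ plusM) * (flipK (depolK q i))ᴴ)
  - vNent (∑ i, flipKext (depolK q i) * (maxEntProj2 ⊗ₖ plusM) * (flipKext (depolK q i))ᴴ)


/-! ### Auxiliary lemmas -/

section Aux

open Finset

-- counting eigenvalues from power sums
lemma sum_g_eigen {n : Type*} [Fintype n] (lam : n → ℝ) (g : ℝ → ℝ) (α β m1 m2 : ℝ)
    (hab : α ≠ β) (ha : α ≠ 0) (hb : β ≠ 0) (hg0 : g 0 = 0)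
    (hmem : ∀ i, lam i = α ∨ lam i = β ∨ lam i = 0)
    (htr : ∑ i, lam i = m1 * α + m2 * β)
    (htr2 : ∑ i, (lam i)^2 = m1 * α^2 + m2 * β^2) :
    ∑ i, g (lam i) = m1 * g α + m2 * g β := by
  classical
  set s1 : Finset n := Finset.univ.filter (fun i => lam i = α) with hs1
  set s2 : Finset n := Finset.univ.filter (fun i => lam i ≠ α ∧ lam i = β) with hs2
  have key : ∀ f : ℝ → ℝ, f 0 = 0 →
      ∑ i, f (lam i) = (s1.card : ℝ) * f α + (s2.card : ℝ) * f β := by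
    intro f hf0
    rw [← Finset.sum_filter_add_sum_filter_not Finset.univ (fun i => lam i = α)]
    have h1 : ∑ i ∈ s1, f (lam i) = (s1.card : ℝ) * f α := by
      rw [Finset.sum_congr rfl (fun i hi => by
        rw [(Finset.mem_filter.mp hi).2]), Finset.sum_const, nsmul_eq_mul]
    rw [h1]
    congr 1
    rw [← Finset.sum_filter_add_sum_filter_not (Finset.univ.filter (fun i => ¬ lam i = α))
        (fun i => lam i = β)]
    have h2 : (Finset.univ.filter (fun i => ¬ lam i = α)).filter (fun i => lam i = β) = s2 := by
      ext i
      simp [hs2, and_comm]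
    have h3 : ∑ i ∈ (Finset.univ.filter (fun i => ¬ lam i = α)).filter (fun i => lam i = β),
        f (lam i) = (s2.card : ℝ) * f β := by
      rw [Finset.sum_congr rfl (fun i hi => by
        rw [(Finset.mem_filter.mp hi).2]), Finset.sum_const, nsmul_eq_mul, h2]
    rw [h3]
    have h4 : ∑ i ∈ (Finset.univ.filter (fun i => ¬ lam i = α)).filter (fun i => ¬ lam i = β),
        f (lam i) = 0 := by
      apply Finset.sum_eq_zero
      intro i hi
      simp only [Finset.mem_filter] at hi
      rcases hmem i with h | h | h
      · exact absurd h hi.1.2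
      · exact absurd h hi.2
      · rw [h, hf0]
    rw [h4, add_zero]
  have e1 := key id rfl
  have e2 := key (fun x => x^2) (by norm_num)
  simp only [id] at e1
  rw [htr] at e1
  rw [htr2] at e2
  set k1 : ℝ := (s1.card : ℝ)
  set k2 : ℝ := (s2.card : ℝ)
  have hu : (k1 - m1) * (α * (α - β)) = 0 := by linear_combination β * e1 - e2
  have hk1 : k1 = m1 := by
    rcases mul_eq_zero.mp hu with h | h
    · linarith
    · rcases mul_eq_zero.mp h with h | h
      · exact absurd h ha
      · exact absurd (sub_eq_zero.mp h) hab
  have hk2 : k2 = m2 := by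
    have : (k2 - m2) * β = 0 := by linear_combination -(α * hk1) - e1
    rcases mul_eq_zero.mp this with h | h
    · linarith
    · exact absurd h hb
  rw [key g hg0, hk1, hk2]

lemma eig_vec_ne_zero {n : Type*} [Fintype n] [DecidableEq n] {A : Matrix n n ℂ}
    (hA : A.IsHermitian) (i : n) : ⇑(hA.eigenvectorBasis i) ≠ 0 := by
  have h := hA.eigenvectorBasis.orthonormal.ne_zero i
  intro hc
  apply h
  ext j
  exact congrFun hc j

lemma real_smul_pi {n : Type*} (r : ℝ) (f : n → ℂ) : r • f = (r : ℂ) • f := by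
  funext x
  simp [Complex.real_smul]

lemma eig_quad {n : Type*} [Fintype n] [DecidableEq n] {A : Matrix n n ℂ}
    (hA : A.IsHermitian) {c1 c0 : ℝ}
    (h : A * A = (c1 : ℂ) • A + (c0 : ℂ) • (1 : Matrix n n ℂ)) (i : n) :
    (hA.eigenvalues i)^2 = c1 * hA.eigenvalues i + c0 := by
  have hv := hA.mulVec_eigenvectorBasis i
  set lam := hA.eigenvalues i with hlam
  set v : n → ℂ := ⇑(hA.eigenvectorBasis i) with hvdef
  have h2 : (A * A) *ᵥ v = ((lam * lam : ℝ) : ℂ) • v := by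
    rw [← Matrix.mulVec_mulVec, hv, Matrix.mulVec_smul, hv, smul_smul, real_smul_pi]
  have h3 : (A * A) *ᵥ v = ((c1 * lam + c0 : ℝ) : ℂ) • v := by
    rw [h, Matrix.add_mulVec, Matrix.smul_mulVec, Matrix.smul_mulVec,
      Matrix.one_mulVec, hv, real_smul_pi, smul_smul]
    funext x
    push_cast
    simp only [Pi.add_apply, Pi.smul_apply, smul_eq_mul]
    ring
  have h4 : (((lam * lam : ℝ) : ℂ) - ((c1 * lam + c0 : ℝ) : ℂ)) • v = 0 := by
    rw [sub_smul, h2.symm.trans h3, sub_self]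
  rcases smul_eq_zero.mp h4 with h5 | h5
  · have h6 : ((lam * lam - (c1 * lam + c0) : ℝ) : ℂ) = 0 := by
      push_cast at h5 ⊢; linear_combination h5
    have := Complex.ofReal_eq_zero.mp h6
    nlinarith [this]
  · exact absurd h5 (eig_vec_ne_zero hA i)

lemma eig_cubic {n : Type*} [Fintype n] [DecidableEq n] {A : Matrix n n ℂ}
    (hA : A.IsHermitian) {c2 c1 : ℝ}
    (h : A * A * A = (c2 : ℂ) • (A * A) + (c1 : ℂ) • A) (i : n) :
    (hA.eigenvalues i)^3 = c2 * (hA.eigenvalues i)^2 + c1 * hA.eigenvalues i := by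
  have hv := hA.mulVec_eigenvectorBasis i
  set lam := hA.eigenvalues i with hlam
  set v : n → ℂ := ⇑(hA.eigenvectorBasis i) with hvdef
  have h2 : (A * A) *ᵥ v = ((lam * lam : ℝ) : ℂ) • v := by
    rw [← Matrix.mulVec_mulVec, hv, Matrix.mulVec_smul, hv, smul_smul, real_smul_pi]
  have h3 : (A * A * A) *ᵥ v = ((lam * lam * lam : ℝ) : ℂ) • v := by
    rw [← Matrix.mulVec_mulVec, hv, Matrix.mulVec_smul, h2, real_smul_pi, smul_smul]
    congr 1
    push_cast
    ring
  have h4 : (A * A * A) *ᵥ v = ((c2 * (lam * lam) + c1 * lam : ℝ) : ℂ) • v := by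
    rw [h, Matrix.add_mulVec, Matrix.smul_mulVec, Matrix.smul_mulVec, h2, hv,
      real_smul_pi, smul_smul, smul_smul]
    funext x
    push_cast
    simp only [Pi.add_apply, Pi.smul_apply, smul_eq_mul]
    ring
  have h5 : (((lam * lam * lam : ℝ) : ℂ) - ((c2 * (lam * lam) + c1 * lam : ℝ) : ℂ)) • v = 0 := by
    rw [sub_smul, h3.symm.trans h4, sub_self]
  rcases smul_eq_zero.mp h5 with h6 | h6
  · have h7 : ((lam * lam * lam - (c2 * (lam * lam) + c1 * lam) : ℝ) : ℂ) = 0 := by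
      push_cast at h6 ⊢; linear_combination h6
    have := Complex.ofReal_eq_zero.mp h7
    nlinarith [this]
  · exact absurd h6 (eig_vec_ne_zero hA i)

lemma star_unitary_mul_self {n : Type*} [Fintype n] [DecidableEq n] {A : Matrix n n ℂ}
    (hA : A.IsHermitian) :
    star (hA.eigenvectorUnitary : Matrix n n ℂ) * (hA.eigenvectorUnitary : Matrix n n ℂ) = 1 :=
  Matrix.UnitaryGroup.star_mul_self _

lemma trace_eq_sum_eigen {n : Type*} [Fintype n] [DecidableEq n] {A : Matrix n n ℂ}
    (hA : A.IsHermitian) : A.trace = ∑ i, (hA.eigenvalues i : ℂ) := by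
  conv_lhs => rw [hA.spectral_theorem, Unitary.conjStarAlgAut_apply]
  rw [Matrix.trace_mul_cycle, star_unitary_mul_self hA, one_mul, Matrix.trace_diagonal]
  rfl

lemma trace_sq_eq_sum_eigen {n : Type*} [Fintype n] [DecidableEq n] {A : Matrix n n ℂ}
    (hA : A.IsHermitian) :
    (A * A).trace = ∑ i, ((hA.eigenvalues i : ℂ)) * ((hA.eigenvalues i : ℂ)) := by
  have key : A * A = (hA.eigenvectorUnitary : Matrix n n ℂ)
      * (Matrix.diagonal (RCLike.ofReal ∘ hA.eigenvalues)
         * Matrix.diagonal (RCLike.ofReal ∘ hA.eigenvalues))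
      * star (hA.eigenvectorUnitary : Matrix n n ℂ) := by
    conv_lhs => rw [hA.spectral_theorem, Unitary.conjStarAlgAut_apply]
    have h1 : ∀ (U D sU : Matrix n n ℂ),
        (U * D * sU) * (U * D * sU) = U * D * (sU * U) * D * sU := fun U D sU => by
      noncomm_ring
    rw [h1, star_unitary_mul_self hA, mul_one]
    noncomm_ring
  rw [key, Matrix.trace_mul_cycle, star_unitary_mul_self hA, one_mul,
    Matrix.diagonal_mul_diagonal, Matrix.trace_diagonal]
  rfl

/-! ### Structure lemmas for the channel outputs -/

lemma kron_conjT {l m n p : Type*} [Fintype l] [Fintype m] [Fintype n] [Fintype p]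
    (A : Matrix l m ℂ) (B : Matrix n p ℂ) : (A ⊗ₖ B)ᴴ = Aᴴ ⊗ₖ Bᴴ := by
  ext ⟨i, a⟩ ⟨j, b⟩
  simp [Matrix.conjTranspose_apply, Matrix.kroneckerMap_apply, mul_comm]

lemma kron_neg_left {l m n p : Type*} (A : Matrix l m ℂ) (B : Matrix n p ℂ) :
    (-A) ⊗ₖ B = -(A ⊗ₖ B) := by
  ext ⟨i, a⟩ ⟨j, b⟩; simp [Matrix.kroneckerMap_apply]

lemma kron_neg_right {l m n p : Type*} (A : Matrix l m ℂ) (B : Matrix n p ℂ) :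
    A ⊗ₖ (-B) = -(A ⊗ₖ B) := by
  ext ⟨i, a⟩ ⟨j, b⟩; simp [Matrix.kroneckerMap_apply]

lemma kron_zero_left {l m n p : Type*} (B : Matrix n p ℂ) :
    (0 : Matrix l m ℂ) ⊗ₖ B = 0 := by
  ext ⟨i, a⟩ ⟨j, b⟩; simp [Matrix.kroneckerMap_apply]

lemma kron_zero_right {l m n p : Type*} (A : Matrix l m ℂ) :
    A ⊗ₖ (0 : Matrix n p ℂ) = 0 := by
  ext ⟨i, a⟩ ⟨j, b⟩; simp [Matrix.kroneckerMap_apply]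

lemma e00H : e00ᴴ = e00 := by
  ext i j; fin_cases i <;> fin_cases j <;> simp [e00]
lemma e11H : e11ᴴ = e11 := by
  ext i j; fin_cases i <;> fin_cases j <;> simp [e11]

lemma plusH : plusMᴴ = plusM := by
  ext i j
  fin_cases i <;> fin_cases j <;> simp [plusM, Matrix.conjTranspose_apply]

lemma pXT : pXᵀ = pX := by
  ext i j; fin_cases i <;> fin_cases j <;> simp [pX]
lemma pYT : pYᵀ = -pY := by
  ext i j; fin_cases i <;> fin_cases j <;> simp [pY]
lemma pZT : pZᵀ = pZ := by
  ext i j; fin_cases i <;> fin_cases j <;> simp [pZ]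
lemma oneT : (1 : Matrix (Fin 2) (Fin 2) ℂ)ᵀ = 1 := Matrix.transpose_one

lemma flipK_smul (c : ℂ) (C : Matrix (Fin 2) (Fin 2) ℂ) : flipK (c • C) = c • flipK C := by
  simp [flipK, Matrix.smul_kronecker, Matrix.transpose_smul, smul_add]

lemma flipKext_smul (c : ℂ) (C : Matrix (Fin 2) (Fin 2) ℂ) :
    flipKext (c • C) = c • flipKext C := by
  simp [flipKext, Matrix.smul_kronecker, Matrix.transpose_smul, smul_add]

lemma sandwich_smul {m : Type*} [Fintype m] (c : ℂ) (B ρ : Matrix m m ℂ) :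
    (c • B) * ρ * (c • B)ᴴ = (c * star c) • (B * ρ * Bᴴ) := by
  rw [Matrix.conjTranspose_smul, Matrix.smul_mul, Matrix.smul_mul, Matrix.mul_smul, smul_smul]

lemma sqrt_cast_mul (x : ℝ) (hx : 0 ≤ x) :
    ((Real.sqrt x : ℝ) : ℂ) * star ((Real.sqrt x : ℝ) : ℂ) = ((x : ℝ) : ℂ) := by
  rw [Complex.star_def, Complex.conj_ofReal, ← Complex.ofReal_mul, Real.mul_self_sqrt hx]

lemma herm_sum {m : Type*} [Fintype m] (B : Fin 4 → Matrix m m ℂ) (ρ : Matrix m m ℂ)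
    (hρ : ρ.IsHermitian) : (∑ i, B i * ρ * (B i)ᴴ).IsHermitian := by
  rw [Matrix.IsHermitian, Matrix.conjTranspose_sum]
  refine Finset.sum_congr rfl (fun i _ => ?_)
  rw [Matrix.conjTranspose_mul, Matrix.conjTranspose_mul, Matrix.conjTranspose_conjTranspose,
    hρ.eq, Matrix.mul_assoc]

/-! ### The small (4 × 4) output -/

noncomputable def U1 : Matrix (Fin 2 × Fin 2) (Fin 2 × Fin 2) ℂ :=
  Matrix.of fun p r => if p.1 = r.1 then 1/4 else 0

noncomputable def UY : Matrix (Fin 2 × Fin 2) (Fin 2 × Fin 2) ℂ :=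
  Matrix.of fun p r => if p.1 = r.1 then (if p.2 = r.2 then 1/4 else -(1/4)) else 0

noncomputable def rho1 : Matrix (Fin 2 × Fin 2) (Fin 2 × Fin 2) ℂ :=
  ((1 / 2 : ℂ) • (1 : Matrix (Fin 2) (Fin 2) ℂ)) ⊗ₖ plusM

set_option maxHeartbeats 1000000 in
lemma T1_one : flipK 1 * rho1 * (flipK 1)ᴴ = U1 := by
  rw [flipK, oneT]
  ext ⟨i, a⟩ ⟨j, b⟩
  fin_cases i <;> fin_cases a <;> fin_cases j <;> fin_cases b <;>
    simp [U1, rho1, plusM, e00, e11, Matrix.mul_apply, Matrix.one_apply,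
      Fintype.sum_prod_type, Fin.sum_univ_two, Matrix.conjTranspose_apply] <;>
    norm_num

set_option maxHeartbeats 1000000 in
lemma T1_X : flipK pX * rho1 * (flipK pX)ᴴ = U1 := by
  rw [flipK, pXT]
  ext ⟨i, a⟩ ⟨j, b⟩
  fin_cases i <;> fin_cases a <;> fin_cases j <;> fin_cases b <;>
    simp [U1, rho1, plusM, e00, e11, pX, Matrix.mul_apply, Matrix.one_apply,
      Fintype.sum_prod_type, Fin.sum_univ_two, Matrix.conjTranspose_apply] <;>
    norm_num

set_option maxHeartbeats 1000000 in
lemma T1_Y : flipK pY * rho1 * (flipK pY)ᴴ = UY := by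
  rw [flipK, pYT]
  ext ⟨i, a⟩ ⟨j, b⟩
  fin_cases i <;> fin_cases a <;> fin_cases j <;> fin_cases b <;>
    simp [UY, rho1, plusM, e00, e11, pY, Matrix.mul_apply, Matrix.one_apply,
      Fintype.sum_prod_type, Fin.sum_univ_two, Matrix.conjTranspose_apply, Complex.ext_iff] <;>
    norm_num

set_option maxHeartbeats 1000000 in
lemma T1_Z : flipK pZ * rho1 * (flipK pZ)ᴴ = U1 := by
  rw [flipK, pZT]
  ext ⟨i, a⟩ ⟨j, b⟩
  fin_cases i <;> fin_cases a <;> fin_cases j <;> fin_cases b <;>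
    simp [U1, rho1, plusM, e00, e11, pZ, Matrix.mul_apply, Matrix.one_apply,
      Fintype.sum_prod_type, Fin.sum_univ_two, Matrix.conjTranspose_apply] <;>
    norm_num

noncomputable def A1m (q : ℝ) : Matrix (Fin 2 × Fin 2) (Fin 2 × Fin 2) ℂ :=
  ((1 - q / 4 : ℝ) : ℂ) • U1 + ((q / 4 : ℝ) : ℂ) • UY

lemma hS1 (q : ℝ) (hq0 : 0 < q) (hq1 : q < 1) :
    (∑ i, flipK (depolK q i)
      * (((1 / 2 : ℂ) • (1 : Matrix (Fin 2) (Fin 2) ℂ)) ⊗ₖ plusM) * (flipK (depolK q i))ᴴ)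
    = A1m q := by
  show (∑ i, flipK (depolK q i) * rho1 * (flipK (depolK q i))ᴴ) = A1m q
  have hq4 : (0:ℝ) ≤ q / 4 := by linarith
  have hq34 : (0:ℝ) ≤ 1 - 3 * q / 4 := by linarith
  rw [Fin.sum_univ_four]
  have d0 : depolK q 0 = ((Real.sqrt (1 - 3 * q / 4) : ℝ) : ℂ) • 1 := rfl
  have d1 : depolK q 1 = ((Real.sqrt (q / 4) : ℝ) : ℂ) • pX := rfl
  have d2 : depolK q 2 = ((Real.sqrt (q / 4) : ℝ) : ℂ) • pY := rfl
  have d3 : depolK q 3 = ((Real.sqrt (q / 4) : ℝ) : ℂ) • pZ := rfl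
  rw [d0, d1, d2, d3, flipK_smul, flipK_smul, flipK_smul, flipK_smul,
    sandwich_smul, sandwich_smul, sandwich_smul, sandwich_smul,
    sqrt_cast_mul _ hq4, sqrt_cast_mul _ hq34, T1_one, T1_X, T1_Y, T1_Z, A1m]
  push_cast
  module

lemma rho1_herm : rho1.IsHermitian := by
  rw [Matrix.IsHermitian, rho1, kron_conjT, plusH, Matrix.conjTranspose_smul,
    Matrix.conjTranspose_one]
  norm_num

lemma U1U1 : U1 * U1 = (1/2 : ℂ) • U1 := by
  ext ⟨i, a⟩ ⟨j, b⟩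
  fin_cases i <;> fin_cases a <;> fin_cases j <;> fin_cases b <;>
    simp [U1, Matrix.mul_apply, Fintype.sum_prod_type, Fin.sum_univ_two] <;> norm_num

lemma UYUY : UY * UY = (1/2 : ℂ) • UY := by
  ext ⟨i, a⟩ ⟨j, b⟩
  fin_cases i <;> fin_cases a <;> fin_cases j <;> fin_cases b <;>
    simp [UY, Matrix.mul_apply, Fintype.sum_prod_type, Fin.sum_univ_two] <;> norm_num

lemma U1UY : U1 * UY = 0 := by
  ext ⟨i, a⟩ ⟨j, b⟩
  fin_cases i <;> fin_cases a <;> fin_cases j <;> fin_cases b <;>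
    simp [U1, UY, Matrix.mul_apply, Fintype.sum_prod_type, Fin.sum_univ_two] <;> norm_num

lemma UYU1 : UY * U1 = 0 := by
  ext ⟨i, a⟩ ⟨j, b⟩
  fin_cases i <;> fin_cases a <;> fin_cases j <;> fin_cases b <;>
    simp [U1, UY, Matrix.mul_apply, Fintype.sum_prod_type, Fin.sum_univ_two] <;> norm_num

lemma onesum : (2:ℂ) • U1 + (2:ℂ) • UY = 1 := by
  ext ⟨i, a⟩ ⟨j, b⟩
  fin_cases i <;> fin_cases a <;> fin_cases j <;> fin_cases b <;>
    simp [U1, UY, Matrix.one_apply, Prod.ext_iff] <;> norm_num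

lemma A1m_quad (q : ℝ) :
    A1m q * A1m q = ((1/2 : ℝ) : ℂ) • A1m q
      + ((-((1/2 - q/8) * (q/8)) : ℝ) : ℂ) • (1 : Matrix (Fin 2 × Fin 2) (Fin 2 × Fin 2) ℂ) := by
  rw [show (1 : Matrix (Fin 2 × Fin 2) (Fin 2 × Fin 2) ℂ) = (2:ℂ) • U1 + (2:ℂ) • UY
    from onesum.symm]
  rw [A1m]
  simp only [Matrix.add_mul, Matrix.mul_add, Matrix.smul_mul, Matrix.mul_smul, smul_smul,
    U1U1, UYUY, U1UY, UYU1, smul_zero, add_zero, zero_add, smul_add]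
  push_cast
  module

lemma trU1 : U1.trace = 1 := by
  simp [Matrix.trace, U1, Matrix.diag, Fintype.sum_prod_type, Fin.sum_univ_two]
  try norm_num

lemma trUY : UY.trace = 1 := by
  simp [Matrix.trace, UY, Matrix.diag, Fintype.sum_prod_type, Fin.sum_univ_two]
  try norm_num

lemma trA1m (q : ℝ) : (A1m q).trace = 1 := by
  rw [A1m, Matrix.trace_add, Matrix.trace_smul, Matrix.trace_smul, trU1, trUY]
  simp only [smul_eq_mul, mul_one]
  push_cast
  ring

/-! ### The big (8 × 8) output -/

def E01 : Matrix (Fin 2) (Fin 2) ℂ := Matrix.of fun i j => if i = 0 ∧ j = 1 then 1 else 0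
def E10 : Matrix (Fin 2) (Fin 2) ℂ := Matrix.of fun i j => if i = 1 ∧ j = 0 then 1 else 0

lemma sandwichExt (C : Matrix (Fin 2) (Fin 2) ℂ) :
    flipKext C * (maxEntProj2 ⊗ₖ plusM) * (flipKext C)ᴴ
      = ((C ⊗ₖ (1 : Matrix (Fin 2) (Fin 2) ℂ)) * maxEntProj2 * (Cᴴ ⊗ₖ (1 : Matrix (Fin 2) (Fin 2) ℂ)))
          ⊗ₖ (e00 * plusM * e00)
      + ((C ⊗ₖ (1 : Matrix (Fin 2) (Fin 2) ℂ)) * maxEntProj2 * ((Cᵀ)ᴴ ⊗ₖ (1 : Matrix (Fin 2) (Fin 2) ℂ)))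
          ⊗ₖ (e00 * plusM * e11)
      + ((Cᵀ ⊗ₖ (1 : Matrix (Fin 2) (Fin 2) ℂ)) * maxEntProj2 * (Cᴴ ⊗ₖ (1 : Matrix (Fin 2) (Fin 2) ℂ)))
          ⊗ₖ (e11 * plusM * e00)
      + ((Cᵀ ⊗ₖ (1 : Matrix (Fin 2) (Fin 2) ℂ)) * maxEntProj2 * ((Cᵀ)ᴴ ⊗ₖ (1 : Matrix (Fin 2) (Fin 2) ℂ)))
          ⊗ₖ (e11 * plusM * e11) := by
  rw [flipKext, Matrix.conjTranspose_add, kron_conjT, kron_conjT, kron_conjT, kron_conjT,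
    e00H, e11H, Matrix.conjTranspose_one]
  simp only [Matrix.add_mul, Matrix.mul_add, mul_kronecker_mul]
  abel

lemma epsum : e00 * plusM * e00 + e00 * plusM * e11 + e11 * plusM * e00 + e11 * plusM * e11
    = plusM := by
  ext i j
  fin_cases i <;> fin_cases j <;>
    simp [e00, e11, plusM, Matrix.mul_apply, Fin.sum_univ_two]

lemma emsum : e00 * plusM * e00 - e00 * plusM * e11 - e11 * plusM * e00 + e11 * plusM * e11
    = minusM := by
  ext i j
  fin_cases i <;> fin_cases j <;>
    simp [e00, e11, plusM, minusM, Matrix.mul_apply, Fin.sum_univ_two] <;> norm_num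

lemma esumP {Q : Matrix (Fin 2 × Fin 2) (Fin 2 × Fin 2) ℂ} :
    Q ⊗ₖ (e00 * plusM * e00) + Q ⊗ₖ (e00 * plusM * e11) + Q ⊗ₖ (e11 * plusM * e00)
      + Q ⊗ₖ (e11 * plusM * e11) = Q ⊗ₖ plusM := by
  rw [← kronecker_add, ← kronecker_add, ← kronecker_add, epsum]

lemma esumM {Q : Matrix (Fin 2 × Fin 2) (Fin 2 × Fin 2) ℂ} :
    Q ⊗ₖ (e00 * plusM * e00) - Q ⊗ₖ (e00 * plusM * e11) - Q ⊗ₖ (e11 * plusM * e00)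
      + Q ⊗ₖ (e11 * plusM * e11) = Q ⊗ₖ minusM := by
  rw [sub_eq_add_neg, sub_eq_add_neg, ← kron_neg_right, ← kron_neg_right,
    ← kronecker_add, ← kronecker_add, ← kronecker_add, ← emsum]
  congr 1
  try abel

noncomputable def QX : Matrix (Fin 2 × Fin 2) (Fin 2 × Fin 2) ℂ :=
  Matrix.of fun p r => if p.1 ≠ p.2 ∧ r.1 ≠ r.2 then 1/2 else 0
noncomputable def QY : Matrix (Fin 2 × Fin 2) (Fin 2 × Fin 2) ℂ :=
  Matrix.of fun p r => if p.1 ≠ p.2 ∧ r.1 ≠ r.2 then (if p.1 = r.1 then 1/2 else -(1/2)) else 0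
noncomputable def QZ : Matrix (Fin 2 × Fin 2) (Fin 2 × Fin 2) ℂ :=
  Matrix.of fun p r => if p.1 = p.2 ∧ r.1 = r.2 then (if p.1 = r.1 then 1/2 else -(1/2)) else 0

set_option maxHeartbeats 1000000 in
lemma QX_eq : (pX ⊗ₖ (1 : Matrix (Fin 2) (Fin 2) ℂ)) * maxEntProj2
    * (pXᴴ ⊗ₖ (1 : Matrix (Fin 2) (Fin 2) ℂ)) = QX := by
  ext ⟨i, a⟩ ⟨j, b⟩
  fin_cases i <;> fin_cases a <;> fin_cases j <;> fin_cases b <;>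
    simp [QX, pX, maxEntProj2, Matrix.mul_apply, Matrix.one_apply, Fintype.sum_prod_type,
      Fin.sum_univ_two, Matrix.conjTranspose_apply]

set_option maxHeartbeats 1000000 in
lemma QY_eq : (pY ⊗ₖ (1 : Matrix (Fin 2) (Fin 2) ℂ)) * maxEntProj2
    * (pYᴴ ⊗ₖ (1 : Matrix (Fin 2) (Fin 2) ℂ)) = QY := by
  ext ⟨i, a⟩ ⟨j, b⟩
  fin_cases i <;> fin_cases a <;> fin_cases j <;> fin_cases b <;>
    simp [QY, pY, maxEntProj2, Matrix.mul_apply, Matrix.one_apply, Fintype.sum_prod_type,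
      Fin.sum_univ_two, Matrix.conjTranspose_apply, Complex.ext_iff]

set_option maxHeartbeats 1000000 in
lemma QZ_eq : (pZ ⊗ₖ (1 : Matrix (Fin 2) (Fin 2) ℂ)) * maxEntProj2
    * (pZᴴ ⊗ₖ (1 : Matrix (Fin 2) (Fin 2) ℂ)) = QZ := by
  ext ⟨i, a⟩ ⟨j, b⟩
  fin_cases i <;> fin_cases a <;> fin_cases j <;> fin_cases b <;>
    simp [QZ, pZ, maxEntProj2, Matrix.mul_apply, Matrix.one_apply, Fintype.sum_prod_type,
      Fin.sum_univ_two, Matrix.conjTranspose_apply]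

lemma Tone_eq : flipKext 1 * (maxEntProj2 ⊗ₖ plusM) * (flipKext 1)ᴴ = maxEntProj2 ⊗ₖ plusM := by
  rw [sandwichExt, Matrix.transpose_one, Matrix.conjTranspose_one, Matrix.one_kronecker_one]
  simp only [Matrix.one_mul, Matrix.mul_one]
  exact esumP

lemma TX_eq : flipKext pX * (maxEntProj2 ⊗ₖ plusM) * (flipKext pX)ᴴ = QX ⊗ₖ plusM := by
  rw [sandwichExt, pXT, QX_eq]
  exact esumP

lemma TZ_eq : flipKext pZ * (maxEntProj2 ⊗ₖ plusM) * (flipKext pZ)ᴴ = QZ ⊗ₖ plusM := by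
  rw [sandwichExt, pZT, QZ_eq]
  exact esumP

lemma TY_eq : flipKext pY * (maxEntProj2 ⊗ₖ plusM) * (flipKext pY)ᴴ = QY ⊗ₖ minusM := by
  rw [sandwichExt, pYT]
  simp only [Matrix.conjTranspose_neg, kron_neg_left, Matrix.mul_neg, Matrix.neg_mul,
    neg_neg, QY_eq]
  rw [← sub_eq_add_neg, ← sub_eq_add_neg]
  exact esumM

noncomputable def A2m (q : ℝ) : Matrix ((Fin 2 × Fin 2) × Fin 2) ((Fin 2 × Fin 2) × Fin 2) ℂ :=
  ((1 - 3 * q / 4 : ℝ) : ℂ) • (maxEntProj2 ⊗ₖ plusM) + ((q / 4 : ℝ) : ℂ) • (QX ⊗ₖ plusM)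
    + ((q / 4 : ℝ) : ℂ) • (QY ⊗ₖ minusM) + ((q / 4 : ℝ) : ℂ) • (QZ ⊗ₖ plusM)

lemma hS2 (q : ℝ) (hq0 : 0 < q) (hq1 : q < 1) :
    (∑ i, flipKext (depolK q i) * (maxEntProj2 ⊗ₖ plusM) * (flipKext (depolK q i))ᴴ)
      = A2m q := by
  have hq4 : (0:ℝ) ≤ q / 4 := by linarith
  have hq34 : (0:ℝ) ≤ 1 - 3 * q / 4 := by linarith
  rw [Fin.sum_univ_four]
  have d0 : depolK q 0 = ((Real.sqrt (1 - 3 * q / 4) : ℝ) : ℂ) • 1 := rfl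
  have d1 : depolK q 1 = ((Real.sqrt (q / 4) : ℝ) : ℂ) • pX := rfl
  have d2 : depolK q 2 = ((Real.sqrt (q / 4) : ℝ) : ℂ) • pY := rfl
  have d3 : depolK q 3 = ((Real.sqrt (q / 4) : ℝ) : ℂ) • pZ := rfl
  rw [d0, d1, d2, d3, flipKext_smul, flipKext_smul, flipKext_smul, flipKext_smul,
    sandwich_smul, sandwich_smul, sandwich_smul, sandwich_smul,
    sqrt_cast_mul _ hq4, sqrt_cast_mul _ hq34, Tone_eq, TX_eq, TY_eq, TZ_eq, A2m]

section Qprod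
set_option maxHeartbeats 1000000

lemma pp : plusM * plusM = plusM := by
  ext i j; fin_cases i <;> fin_cases j <;>
    simp [plusM, Matrix.mul_apply, Fin.sum_univ_two] <;> norm_num
lemma mm : minusM * minusM = minusM := by
  ext i j; fin_cases i <;> fin_cases j <;>
    simp [minusM, Matrix.mul_apply, Fin.sum_univ_two] <;> norm_num
lemma pm : plusM * minusM = 0 := by
  ext i j; fin_cases i <;> fin_cases j <;>
    simp [minusM, plusM, Matrix.mul_apply, Fin.sum_univ_two] <;> norm_num
lemma mp : minusM * plusM = 0 := by
  ext i j; fin_cases i <;> fin_cases j <;>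
    simp [minusM, plusM, Matrix.mul_apply, Fin.sum_univ_two] <;> norm_num

lemma q00 : maxEntProj2 * maxEntProj2 = maxEntProj2 := by
  ext ⟨i, a⟩ ⟨j, b⟩
  fin_cases i <;> fin_cases a <;> fin_cases j <;> fin_cases b <;>
    simp [maxEntProj2, Matrix.mul_apply, Fintype.sum_prod_type, Fin.sum_univ_two] <;> norm_num
lemma qXX : QX * QX = QX := by
  ext ⟨i, a⟩ ⟨j, b⟩
  fin_cases i <;> fin_cases a <;> fin_cases j <;> fin_cases b <;>
    simp [QX, Matrix.mul_apply, Fintype.sum_prod_type, Fin.sum_univ_two] <;> norm_num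
lemma qYY : QY * QY = QY := by
  ext ⟨i, a⟩ ⟨j, b⟩
  fin_cases i <;> fin_cases a <;> fin_cases j <;> fin_cases b <;>
    simp [QY, Matrix.mul_apply, Fintype.sum_prod_type, Fin.sum_univ_two] <;> norm_num
lemma qZZ : QZ * QZ = QZ := by
  ext ⟨i, a⟩ ⟨j, b⟩
  fin_cases i <;> fin_cases a <;> fin_cases j <;> fin_cases b <;>
    simp [QZ, Matrix.mul_apply, Fintype.sum_prod_type, Fin.sum_univ_two] <;> norm_num
lemma q0X : maxEntProj2 * QX = 0 := by
  ext ⟨i, a⟩ ⟨j, b⟩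
  fin_cases i <;> fin_cases a <;> fin_cases j <;> fin_cases b <;>
    simp [maxEntProj2, QX, Matrix.mul_apply, Fintype.sum_prod_type, Fin.sum_univ_two] <;> norm_num
lemma qX0 : QX * maxEntProj2 = 0 := by
  ext ⟨i, a⟩ ⟨j, b⟩
  fin_cases i <;> fin_cases a <;> fin_cases j <;> fin_cases b <;>
    simp [maxEntProj2, QX, Matrix.mul_apply, Fintype.sum_prod_type, Fin.sum_univ_two] <;> norm_num
lemma q0Z : maxEntProj2 * QZ = 0 := by
  ext ⟨i, a⟩ ⟨j, b⟩
  fin_cases i <;> fin_cases a <;> fin_cases j <;> fin_cases b <;>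
    simp [maxEntProj2, QZ, Matrix.mul_apply, Fintype.sum_prod_type, Fin.sum_univ_two] <;> norm_num
lemma qZ0 : QZ * maxEntProj2 = 0 := by
  ext ⟨i, a⟩ ⟨j, b⟩
  fin_cases i <;> fin_cases a <;> fin_cases j <;> fin_cases b <;>
    simp [maxEntProj2, QZ, Matrix.mul_apply, Fintype.sum_prod_type, Fin.sum_univ_two] <;> norm_num
lemma qXZ : QX * QZ = 0 := by
  ext ⟨i, a⟩ ⟨j, b⟩
  fin_cases i <;> fin_cases a <;> fin_cases j <;> fin_cases b <;>
    simp [QX, QZ, Matrix.mul_apply, Fintype.sum_prod_type, Fin.sum_univ_two] <;> norm_num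
lemma qZX : QZ * QX = 0 := by
  ext ⟨i, a⟩ ⟨j, b⟩
  fin_cases i <;> fin_cases a <;> fin_cases j <;> fin_cases b <;>
    simp [QX, QZ, Matrix.mul_apply, Fintype.sum_prod_type, Fin.sum_univ_two] <;> norm_num
end Qprod

lemma K11 : (maxEntProj2 ⊗ₖ plusM) * (maxEntProj2 ⊗ₖ plusM) = maxEntProj2 ⊗ₖ plusM := by
  rw [← mul_kronecker_mul, q00, pp]
lemma K22 : (QX ⊗ₖ plusM) * (QX ⊗ₖ plusM) = QX ⊗ₖ plusM := by
  rw [← mul_kronecker_mul, qXX, pp]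
lemma K33 : (QY ⊗ₖ minusM) * (QY ⊗ₖ minusM) = QY ⊗ₖ minusM := by
  rw [← mul_kronecker_mul, qYY, mm]
lemma K44 : (QZ ⊗ₖ plusM) * (QZ ⊗ₖ plusM) = QZ ⊗ₖ plusM := by
  rw [← mul_kronecker_mul, qZZ, pp]
lemma K12 : (maxEntProj2 ⊗ₖ plusM) * (QX ⊗ₖ plusM) = 0 := by
  rw [← mul_kronecker_mul, q0X, kron_zero_left]
lemma K21 : (QX ⊗ₖ plusM) * (maxEntProj2 ⊗ₖ plusM) = 0 := by
  rw [← mul_kronecker_mul, qX0, kron_zero_left]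
lemma K13 : (maxEntProj2 ⊗ₖ plusM) * (QY ⊗ₖ minusM) = 0 := by
  rw [← mul_kronecker_mul, pm, kron_zero_right]
lemma K31 : (QY ⊗ₖ minusM) * (maxEntProj2 ⊗ₖ plusM) = 0 := by
  rw [← mul_kronecker_mul, mp, kron_zero_right]
lemma K14 : (maxEntProj2 ⊗ₖ plusM) * (QZ ⊗ₖ plusM) = 0 := by
  rw [← mul_kronecker_mul, q0Z, kron_zero_left]
lemma K41 : (QZ ⊗ₖ plusM) * (maxEntProj2 ⊗ₖ plusM) = 0 := by
  rw [← mul_kronecker_mul, qZ0, kron_zero_left]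
lemma K23 : (QX ⊗ₖ plusM) * (QY ⊗ₖ minusM) = 0 := by
  rw [← mul_kronecker_mul, pm, kron_zero_right]
lemma K32 : (QY ⊗ₖ minusM) * (QX ⊗ₖ plusM) = 0 := by
  rw [← mul_kronecker_mul, mp, kron_zero_right]
lemma K24 : (QX ⊗ₖ plusM) * (QZ ⊗ₖ plusM) = 0 := by
  rw [← mul_kronecker_mul, qXZ, kron_zero_left]
lemma K42 : (QZ ⊗ₖ plusM) * (QX ⊗ₖ plusM) = 0 := by
  rw [← mul_kronecker_mul, qZX, kron_zero_left]
lemma K34 : (QY ⊗ₖ minusM) * (QZ ⊗ₖ plusM) = 0 := by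
  rw [← mul_kronecker_mul, mp, kron_zero_right]
lemma K43 : (QZ ⊗ₖ plusM) * (QY ⊗ₖ minusM) = 0 := by
  rw [← mul_kronecker_mul, pm, kron_zero_right]

lemma A2m_sq (q : ℝ) :
    A2m q * A2m q
      = (((1 - 3 * q / 4 : ℝ) : ℂ) * ((1 - 3 * q / 4 : ℝ) : ℂ)) • (maxEntProj2 ⊗ₖ plusM)
        + (((q / 4 : ℝ) : ℂ) * ((q / 4 : ℝ) : ℂ)) • (QX ⊗ₖ plusM)
        + (((q / 4 : ℝ) : ℂ) * ((q / 4 : ℝ) : ℂ)) • (QY ⊗ₖ minusM)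
        + (((q / 4 : ℝ) : ℂ) * ((q / 4 : ℝ) : ℂ)) • (QZ ⊗ₖ plusM) := by
  rw [A2m]
  simp only [Matrix.add_mul, Matrix.mul_add, Matrix.smul_mul, Matrix.mul_smul, smul_smul,
    K11, K22, K33, K44, K12, K21, K13, K31, K14, K41, K23, K32, K24, K42, K34, K43,
    smul_zero, add_zero, zero_add]

lemma A2m_cubic (q : ℝ) :
    A2m q * A2m q * A2m q
      = ((1 - q / 2 : ℝ) : ℂ) • (A2m q * A2m q)
        + ((-((1 - 3 * q / 4) * (q / 4)) : ℝ) : ℂ) • A2m q := by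
  rw [A2m_sq]
  nth_rewrite 2 [A2m]
  rw [A2m]
  simp only [Matrix.add_mul, Matrix.mul_add, Matrix.smul_mul, Matrix.mul_smul, smul_smul,
    K11, K22, K33, K44, K12, K21, K13, K31, K14, K41, K23, K32, K24, K42, K34, K43,
    smul_zero, add_zero, zero_add, smul_add]
  push_cast
  module

lemma trPhi : (maxEntProj2).trace = 1 := by
  simp [Matrix.trace, maxEntProj2, Matrix.diag, Fintype.sum_prod_type, Fin.sum_univ_two]
  try norm_num
lemma trQX : QX.trace = 1 := by
  simp [Matrix.trace, QX, Matrix.diag, Fintype.sum_prod_type, Fin.sum_univ_two]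
  try norm_num
lemma trQY : QY.trace = 1 := by
  simp [Matrix.trace, QY, Matrix.diag, Fintype.sum_prod_type, Fin.sum_univ_two]
  try norm_num
lemma trQZ : QZ.trace = 1 := by
  simp [Matrix.trace, QZ, Matrix.diag, Fintype.sum_prod_type, Fin.sum_univ_two]
  try norm_num
lemma trP : plusM.trace = 1 := by
  simp [Matrix.trace, plusM, Matrix.diag, Fin.sum_univ_two]
  try norm_num
lemma trM : minusM.trace = 1 := by
  simp [Matrix.trace, minusM, Matrix.diag, Fin.sum_univ_two]
  try norm_num

lemma trA2m (q : ℝ) : (A2m q).trace = ((1 - 3 * q / 4 : ℝ) : ℂ) + 3 * ((q / 4 : ℝ) : ℂ) := by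
  rw [A2m]
  rw [Matrix.trace_add, Matrix.trace_add, Matrix.trace_add, Matrix.trace_smul,
    Matrix.trace_smul, Matrix.trace_smul, Matrix.trace_smul,
    Matrix.trace_kronecker, Matrix.trace_kronecker, Matrix.trace_kronecker,
    Matrix.trace_kronecker, trPhi, trQX, trQY, trQZ, trP, trM]
  simp
  ring

lemma trA2msq (q : ℝ) : (A2m q * A2m q).trace
    = ((1 - 3 * q / 4 : ℝ) : ℂ) * ((1 - 3 * q / 4 : ℝ) : ℂ)
      + 3 * (((q / 4 : ℝ) : ℂ) * ((q / 4 : ℝ) : ℂ)) := by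
  rw [A2m_sq]
  rw [Matrix.trace_add, Matrix.trace_add, Matrix.trace_add, Matrix.trace_smul,
    Matrix.trace_smul, Matrix.trace_smul, Matrix.trace_smul,
    Matrix.trace_kronecker, Matrix.trace_kronecker, Matrix.trace_kronecker,
    Matrix.trace_kronecker, trPhi, trQX, trQY, trQZ, trP, trM]
  simp
  ring

lemma phiH : maxEntProj2ᴴ = maxEntProj2 := by
  ext ⟨i, a⟩ ⟨j, b⟩
  fin_cases i <;> fin_cases a <;> fin_cases j <;> fin_cases b <;>
    simp [maxEntProj2, Matrix.conjTranspose_apply]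
lemma rho2_herm : (maxEntProj2 ⊗ₖ plusM).IsHermitian := by
  rw [Matrix.IsHermitian, kron_conjT, phiH, plusH]

/-! ### Entropy computations -/

lemma vN1 (q : ℝ) (hq0 : 0 < q) (hq1 : q < 1) :
    vNent (A1m q)
      = -((1 - q / 4) * Real.logb 2 (1 / 2 - q / 8) + (q / 4) * Real.logb 2 (q / 8)) := by
  have hherm : (A1m q).IsHermitian := by
    have h : (∑ i, flipK (depolK q i)
        * (((1 / 2 : ℂ) • (1 : Matrix (Fin 2) (Fin 2) ℂ)) ⊗ₖ plusM)
        * (flipK (depolK q i))ᴴ).IsHermitian :=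
      herm_sum (fun i => flipK (depolK q i)) _ rho1_herm
    rwa [hS1 q hq0 hq1] at h
  rw [vNent, dif_pos hherm]
  have hquad := A1m_quad q
  have heq := fun i => eig_quad hherm hquad i
  have hmem : ∀ i, hherm.eigenvalues i = (1/2 - q/8) ∨ hherm.eigenvalues i = q/8
      ∨ hherm.eigenvalues i = 0 := by
    intro i
    have h := heq i
    have h2 : (hherm.eigenvalues i - (1/2 - q/8)) * (hherm.eigenvalues i - q/8) = 0 := by
      linear_combination h
    rcases mul_eq_zero.mp h2 with h' | h'
    · left; linarith
    · right; left; linarith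
  have htr : ∑ i, hherm.eigenvalues i = 2 * (1/2 - q/8) + 2 * (q/8) := by
    have h := (trace_eq_sum_eigen hherm).symm.trans (trA1m q)
    have h' : ((∑ i, hherm.eigenvalues i : ℝ) : ℂ) = ((2 * (1/2 - q/8) + 2 * (q/8) : ℝ) : ℂ) := by
      push_cast at h ⊢
      linear_combination h
    exact_mod_cast h'
  have htr2 : ∑ i, (hherm.eigenvalues i)^2 = 2 * (1/2 - q/8)^2 + 2 * (q/8)^2 := by
    have h : ∑ i, (hherm.eigenvalues i)^2
        = ∑ i, ((1/2) * hherm.eigenvalues i + (-((1/2 - q/8) * (q/8)))) :=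
      Finset.sum_congr rfl (fun i _ => heq i)
    rw [h, Finset.sum_add_distrib, ← Finset.mul_sum, htr, Finset.sum_const]
    simp only [Finset.card_univ]
    norm_num [Fintype.card_prod]
    ring
  rw [sum_g_eigen hherm.eigenvalues (fun x => x * Real.logb 2 x) (1/2 - q/8) (q/8) 2 2
    (by intro h; rw [sub_eq_iff_eq_add] at h; linarith)
    (by intro h; rw [sub_eq_zero] at h; linarith)
    (by positivity)
    (by simp)
    hmem htr htr2]
  ring

lemma vN2 (q : ℝ) (hq0 : 0 < q) (hq1 : q < 1) :
    vNent (A2m q)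
      = -((1 - 3 * q / 4) * Real.logb 2 (1 - 3 * q / 4) + 3 * (q / 4) * Real.logb 2 (q / 4)) := by
  have hherm : (A2m q).IsHermitian := by
    have h : (∑ i, flipKext (depolK q i) * (maxEntProj2 ⊗ₖ plusM)
        * (flipKext (depolK q i))ᴴ).IsHermitian :=
      herm_sum (fun i => flipKext (depolK q i)) _ rho2_herm
    rwa [hS2 q hq0 hq1] at h
  rw [vNent, dif_pos hherm]
  have hcubic := A2m_cubic q
  have heq := fun i => eig_cubic hherm hcubic i
  have hmem : ∀ i, hherm.eigenvalues i = (1 - 3 * q / 4) ∨ hherm.eigenvalues i = q / 4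
      ∨ hherm.eigenvalues i = 0 := by
    intro i
    have h := heq i
    have h2 : hherm.eigenvalues i
        * ((hherm.eigenvalues i - (1 - 3 * q / 4)) * (hherm.eigenvalues i - q / 4)) = 0 := by
      linear_combination h
    rcases mul_eq_zero.mp h2 with h' | h'
    · right; right; exact h'
    · rcases mul_eq_zero.mp h' with h'' | h''
      · left; linarith
      · right; left; linarith
  have htr : ∑ i, hherm.eigenvalues i = 1 * (1 - 3 * q / 4) + 3 * (q / 4) := by
    have h := (trace_eq_sum_eigen hherm).symm.trans (trA2m q)
    have h' : ((∑ i, hherm.eigenvalues i : ℝ) : ℂ)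
        = ((1 * (1 - 3 * q / 4) + 3 * (q / 4) : ℝ) : ℂ) := by
      push_cast at h ⊢
      linear_combination h
    exact_mod_cast h'
  have htr2 : ∑ i, (hherm.eigenvalues i)^2 = 1 * (1 - 3 * q / 4)^2 + 3 * (q / 4)^2 := by
    have h := (trace_sq_eq_sum_eigen hherm).symm.trans (trA2msq q)
    have h' : ((∑ i, (hherm.eigenvalues i)^2 : ℝ) : ℂ)
        = ((1 * (1 - 3 * q / 4)^2 + 3 * (q / 4)^2 : ℝ) : ℂ) := by
      push_cast at h ⊢
      ring_nf at h ⊢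
      linear_combination h
    exact_mod_cast h'
  rw [sum_g_eigen hherm.eigenvalues (fun x => x * Real.logb 2 x) (1 - 3 * q / 4) (q / 4) 1 3
    (by intro h; nlinarith)
    (by intro h; nlinarith)
    (by positivity)
    (by simp)
    hmem htr htr2]
  ring

end Aux

/-- The coherent information of the flipped qubit depolarising channel at the maximally
mixed input equals
`−(1−q/4)log₂(1/2−q/8) − (q/4)log₂(q/8) + (3q/4)log₂(q/4) + (1−3q/4)log₂(1−3q/4)`, and
it is strictly positive at `q = 1/3`. -/
theorem coherent_info_flipped_depolarising (q : ℝ) (hq0 : 0 < q) (hq1 : q < 1) :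
    IcFlipped q
      = -(1 - q / 4) * Real.logb 2 (1 / 2 - q / 8) - (q / 4) * Real.logb 2 (q / 8)
        + (3 * q / 4) * Real.logb 2 (q / 4) + (1 - 3 * q / 4) * Real.logb 2 (1 - 3 * q / 4)
    ∧ (q = 1 / 3 → 0 < IcFlipped q) := by
  have hmain : IcFlipped q
      = -(1 - q / 4) * Real.logb 2 (1 / 2 - q / 8) - (q / 4) * Real.logb 2 (q / 8)
        + (3 * q / 4) * Real.logb 2 (q / 4) + (1 - 3 * q / 4) * Real.logb 2 (1 - 3 * q / 4) := by
    have e1 : IcFlipped q = vNent (A1m q) - vNent (A2m q) := by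
      rw [IcFlipped, hS1 q hq0 hq1, hS2 q hq0 hq1]
    rw [e1, vN1 q hq0 hq1, vN2 q hq0 hq1]
    ring
  refine ⟨hmain, fun hq13 => ?_⟩
  rw [hmain, hq13]
  simp only [Real.logb]
  rw [show Real.log ((1:ℝ)/2 - 1/3/8) = Real.log (11/24) by norm_num,
    show Real.log ((1:ℝ)/3/8) = Real.log (1/24 : ℝ) by norm_num,
    show Real.log ((1:ℝ)/3/4) = Real.log (1/12 : ℝ) by norm_num,
    show Real.log ((1:ℝ) - 3 * (1/3) / 4) = Real.log (3/4 : ℝ) by norm_num]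
  have l2 : (0:ℝ) < Real.log 2 := Real.log_pos (by norm_num)
  have l24 : Real.log 24 = 3 * Real.log 2 + Real.log 3 := by
    rw [show (24:ℝ) = 2^3 * 3 by norm_num, Real.log_mul (by positivity) (by norm_num),
      Real.log_pow]
    push_cast; ring
  have l12 : Real.log 12 = 2 * Real.log 2 + Real.log 3 := by
    rw [show (12:ℝ) = 2^2 * 3 by norm_num, Real.log_mul (by positivity) (by norm_num),
      Real.log_pow]
    push_cast; ring
  have l4 : Real.log 4 = 2 * Real.log 2 := by
    rw [show (4:ℝ) = 2^2 by norm_num, Real.log_pow]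
    push_cast; ring
  have h1124 : Real.log (11/24 : ℝ) = Real.log 11 - (3 * Real.log 2 + Real.log 3) := by
    rw [Real.log_div (by norm_num) (by norm_num), l24]
  have h124 : Real.log (1/24 : ℝ) = -(3 * Real.log 2 + Real.log 3) := by
    rw [show (1/24 : ℝ) = 24⁻¹ by norm_num, Real.log_inv, l24]
  have h112 : Real.log (1/12 : ℝ) = -(2 * Real.log 2 + Real.log 3) := by
    rw [show (1/12 : ℝ) = 12⁻¹ by norm_num, Real.log_inv, l12]
  have h34 : Real.log (3/4 : ℝ) = Real.log 3 - 2 * Real.log 2 := by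
    rw [Real.log_div (by norm_num) (by norm_num), l4]
  rw [h1124, h124, h112, h34]
  have key : 11 * Real.log 11 < 12 * Real.log 2 + 18 * Real.log 3 := by
    have h : Real.log ((11:ℝ)^11) < Real.log ((2:ℝ)^12 * 3^18) :=
      Real.log_lt_log (by positivity) (by norm_num)
    rw [Real.log_pow, Real.log_mul (by positivity) (by positivity), Real.log_pow,
      Real.log_pow] at h
    push_cast at h
    linarith
  have h2 : (0:ℝ) < (12 * Real.log 2 + 18 * Real.log 3 - 11 * Real.log 11)
      / (12 * Real.log 2) := div_pos (by linarith) (by linarith)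
  convert h2 using 1
  ring
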